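/- Let (X, μ) be a σ-finite measure space, let 0 < α < 1, and let f, g : X → ℝ be measurable functions that are strictly positive μ-almost everywhere. Assume that the four integrals ∫_X f^{1-1/α} dμ, ∫_X g^{α-1} dμ, ∫_X g^α · f^{-1/α} dμ and ∫_X f · g^{-1} dμ are all finite and strictly positive. Then equality (∫_X f^{1-1/α} dμ) · (∫_X g^{α-1} dμ) = (∫_X g^α · f^{-1/α} dμ) · (∫_X f · g^{-1} dμ) holds if and only if there exists a constant c > 0 such that g^α = c · f μ-almost everywhere. -/

import Mathlib

open MeasureTheory ENNReal

/-- Strict weighted AM-GM for two positive reals. -/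
lemma amgm_strict {P Q a b : ℝ} (hP : 0 < P) (hQ : 0 < Q) (hPQ : P + Q = 1)
    (ha : 0 < a) (hb : 0 < b) (hab : a ≠ b) : a ^ P * b ^ Q < P * a + Q * b := by
  have h := strictConcaveOn_log_Ioi.2 (Set.mem_Ioi.2 ha) (Set.mem_Ioi.2 hb) hab hP hQ hPQ
  simp only [smul_eq_mul] at h
  have hsum : 0 < P * a + Q * b := by positivity
  have hlhs : 0 < a ^ P * b ^ Q := by positivity
  rw [← Real.log_lt_log_iff hlhs hsum]
  rwa [Real.log_mul (by positivity) (by positivity), Real.log_rpow ha, Real.log_rpow hb]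

lemma amgm_eq_imp {P Q a b : ℝ} (hP : 0 < P) (hQ : 0 < Q) (hPQ : P + Q = 1)
    (ha : 0 < a) (hb : 0 < b) (h : P * a + Q * b = a ^ P * b ^ Q) : a = b := by
  by_contra hab
  exact ne_of_lt (amgm_strict hP hQ hPQ ha hb hab) h.symm

/-- identity 1 : a plays role of f x, b of g x. -/
lemma ident1 {α a b : ℝ} (hα0 : 0 < α) (ha : 0 < a) (hb : 0 < b) :
    a ^ (1 - 1/α) = (b ^ α * a ^ (-(1/α))) ^ (1/(1+α)) * (a * b⁻¹) ^ (α/(1+α)) := by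
  have h1 : (0:ℝ) < 1 + α := by linarith
  have hu : 0 < b ^ α * a ^ (-(1/α)) := by positivity
  have hv : 0 < a * b⁻¹ := by positivity
  apply Real.log_injOn_pos (Set.mem_Ioi.2 (by positivity)) (Set.mem_Ioi.2 (by positivity))
  rw [Real.log_rpow ha, Real.log_mul (by positivity) (by positivity),
    Real.log_rpow hu, Real.log_rpow hv, Real.log_mul (by positivity) (by positivity),
    Real.log_rpow hb, Real.log_rpow ha, Real.log_mul ha.ne' (by positivity), Real.log_inv]
  field_simp
  ring

lemma ident2 {α a b : ℝ} (hα0 : 0 < α) (ha : 0 < a) (hb : 0 < b) :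
    b ^ (α - 1) = (b ^ α * a ^ (-(1/α))) ^ (α/(1+α)) * (a * b⁻¹) ^ (1/(1+α)) := by
  have h1 : (0:ℝ) < 1 + α := by linarith
  have hu : 0 < b ^ α * a ^ (-(1/α)) := by positivity
  have hv : 0 < a * b⁻¹ := by positivity
  apply Real.log_injOn_pos (Set.mem_Ioi.2 (by positivity)) (Set.mem_Ioi.2 (by positivity))
  rw [Real.log_rpow hb, Real.log_mul (by positivity) (by positivity),
    Real.log_rpow hu, Real.log_rpow hv, Real.log_mul (by positivity) (by positivity),
    Real.log_rpow hb, Real.log_rpow ha, Real.log_mul ha.ne' (by positivity), Real.log_inv]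
  field_simp
  ring

/-- One Hölder/AM-GM step with normalized weights: the integral of the geometric mean is `≤ 1`,
with equality iff `p = q` a.e. -/
lemma holder_step {X : Type*} [MeasurableSpace X] (μ : Measure X) {P Q : ℝ}
    (hP : 0 < P) (hQ : 0 < Q) (hPQ : P + Q = 1) {p q : X → ℝ}
    (hmp : Measurable p) (hmq : Measurable q)
    (hp : ∀ᵐ x ∂μ, 0 < p x) (hq : ∀ᵐ x ∂μ, 0 < q x)
    (hp1 : ∫⁻ x, ENNReal.ofReal (p x) ∂μ = 1) (hq1 : ∫⁻ x, ENNReal.ofReal (q x) ∂μ = 1) :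
    ∫⁻ x, ENNReal.ofReal (p x ^ P * q x ^ Q) ∂μ ≤ 1 ∧
      (∫⁻ x, ENNReal.ofReal (p x ^ P * q x ^ Q) ∂μ = 1 → p =ᵐ[μ] q) := by
  have hmW : Measurable fun x => ENNReal.ofReal (P * p x + Q * q x) :=
    ((measurable_const.mul hmp).add (measurable_const.mul hmq)).ennreal_ofReal
  have hmZ : Measurable fun x => ENNReal.ofReal (p x ^ P * q x ^ Q) :=
    ((hmp.pow measurable_const).mul (hmq.pow measurable_const)).ennreal_ofReal
  have hWint : ∫⁻ x, ENNReal.ofReal (P * p x + Q * q x) ∂μ = 1 := by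
    have hcongr : ∫⁻ x, ENNReal.ofReal (P * p x + Q * q x) ∂μ
        = ∫⁻ x, (ENNReal.ofReal P * ENNReal.ofReal (p x)
            + ENNReal.ofReal Q * ENNReal.ofReal (q x)) ∂μ := by
      refine lintegral_congr_ae ?_
      filter_upwards [hp, hq] with x hpx hqx
      rw [ENNReal.ofReal_add (by positivity) (by positivity),
        ENNReal.ofReal_mul hP.le, ENNReal.ofReal_mul hQ.le]
    rw [hcongr, lintegral_add_left (hmp.ennreal_ofReal.const_mul _) ,
      lintegral_const_mul _ hmp.ennreal_ofReal, lintegral_const_mul _ hmq.ennreal_ofReal,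
      hp1, hq1, mul_one, mul_one, ← ENNReal.ofReal_add hP.le hQ.le, hPQ, ENNReal.ofReal_one]
  have hle_ae : ∀ᵐ x ∂μ, ENNReal.ofReal (p x ^ P * q x ^ Q)
      ≤ ENNReal.ofReal (P * p x + Q * q x) := by
    filter_upwards [hp, hq] with x hpx hqx
    exact ENNReal.ofReal_le_ofReal
      (Real.geom_mean_le_arith_mean2_weighted hP.le hQ.le hpx.le hqx.le hPQ)
  refine ⟨(lintegral_mono_ae hle_ae).trans_eq hWint, fun hZ1 => ?_⟩
  have hsub : ∫⁻ x, (ENNReal.ofReal (P * p x + Q * q x)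
      - ENNReal.ofReal (p x ^ P * q x ^ Q)) ∂μ = 0 := by
    rw [lintegral_sub hmZ (by rw [hZ1]; exact one_ne_top) hle_ae, hWint, hZ1, tsub_self]
  have h0 := (lintegral_eq_zero_iff (hmW.sub hmZ)).mp hsub
  filter_upwards [h0, hp, hq, hle_ae] with x hx0 hpx hqx hlex
  have hWZ : ENNReal.ofReal (P * p x + Q * q x) = ENNReal.ofReal (p x ^ P * q x ^ Q) :=
    le_antisymm (tsub_eq_zero_iff_le.mp hx0) hlex
  have hreal : P * p x + Q * q x = p x ^ P * q x ^ Q :=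
    (ENNReal.ofReal_eq_ofReal_iff (by positivity) (by positivity)).mp hWZ
  exact amgm_eq_imp hP hQ hPQ hpx hqx hreal


/-- equality case of inequality (4.11) in Lemma 4.3, case `0 < α < 1`:
on a σ-finite measure space, for measurable, a.e. strictly positive `f, g` whose four
relevant integrals are finite and strictly positive, equality
`(∫ f^{1-1/α}) · (∫ g^{α-1}) = (∫ g^α · f^{-1/α}) · (∫ f · g⁻¹)` holds if and only if
`g^α = c · f` a.e. for some constant `c > 0`. -/
theorem alphaGauss_key_integral_equality_iff
    {X : Type*} [MeasurableSpace X] (μ : Measure X) [SigmaFinite μ]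
    (α : ℝ) (hα0 : 0 < α) (hα1 : α < 1)
    (f g : X → ℝ) (hf : Measurable f) (hg : Measurable g)
    (hfpos : ∀ᵐ x ∂μ, 0 < f x) (hgpos : ∀ᵐ x ∂μ, 0 < g x)
    (hI1 : 0 < ∫⁻ x, ENNReal.ofReal (f x ^ (1 - 1/α)) ∂μ)
    (hI1' : ∫⁻ x, ENNReal.ofReal (f x ^ (1 - 1/α)) ∂μ < ∞)
    (hI2 : 0 < ∫⁻ x, ENNReal.ofReal (g x ^ (α - 1)) ∂μ)
    (hI2' : ∫⁻ x, ENNReal.ofReal (g x ^ (α - 1)) ∂μ < ∞)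
    (hI3 : 0 < ∫⁻ x, ENNReal.ofReal (g x ^ α * f x ^ (-(1/α))) ∂μ)
    (hI3' : ∫⁻ x, ENNReal.ofReal (g x ^ α * f x ^ (-(1/α))) ∂μ < ∞)
    (hI4 : 0 < ∫⁻ x, ENNReal.ofReal (f x * (g x)⁻¹) ∂μ)
    (hI4' : ∫⁻ x, ENNReal.ofReal (f x * (g x)⁻¹) ∂μ < ∞) :
    (∫⁻ x, ENNReal.ofReal (f x ^ (1 - 1/α)) ∂μ) *
        (∫⁻ x, ENNReal.ofReal (g x ^ (α - 1)) ∂μ) =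
      (∫⁻ x, ENNReal.ofReal (g x ^ α * f x ^ (-(1/α))) ∂μ) *
        (∫⁻ x, ENNReal.ofReal (f x * (g x)⁻¹) ∂μ) ↔
    ∃ c : ℝ, 0 < c ∧ ∀ᵐ x ∂μ, g x ^ α = c * f x := by
  have hα : α ≠ 0 := hα0.ne'
  have h1α : (0:ℝ) < 1 + α := by linarith
  set A := ∫⁻ x, ENNReal.ofReal (f x ^ (1 - 1/α)) ∂μ with hA_def
  set B := ∫⁻ x, ENNReal.ofReal (g x ^ (α - 1)) ∂μ with hB_def
  set C := ∫⁻ x, ENNReal.ofReal (g x ^ α * f x ^ (-(1/α))) ∂μ with hC_def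
  set D := ∫⁻ x, ENNReal.ofReal (f x * (g x)⁻¹) ∂μ with hD_def
  have hmu : Measurable fun x => g x ^ α * f x ^ (-(1/α)) :=
    (hg.pow measurable_const).mul (hf.pow measurable_const)
  have hmv : Measurable fun x => f x * (g x)⁻¹ := hf.mul hg.inv
  set cC := C.toReal with hcC_def
  set dD := D.toReal with hdD_def
  have hcC : 0 < cC := ENNReal.toReal_pos hI3.ne' hI3'.ne
  have hdD : 0 < dD := ENNReal.toReal_pos hI4.ne' hI4'.ne
  have hC : C = ENNReal.ofReal cC := (ENNReal.ofReal_toReal hI3'.ne).symm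
  have hD : D = ENNReal.ofReal dD := (ENNReal.ofReal_toReal hI4'.ne).symm
  constructor
  · -- hard direction
    intro h
    set rP := 1/(1+α) with hrP_def
    set rQ := α/(1+α) with hrQ_def
    have hrP : 0 < rP := by positivity
    have hrQ : 0 < rQ := by positivity
    have hrPQ : rP + rQ = 1 := by rw [hrP_def, hrQ_def]; field_simp
    set p : X → ℝ := fun x => cC⁻¹ * (g x ^ α * f x ^ (-(1/α))) with hp_def
    set q : X → ℝ := fun x => dD⁻¹ * (f x * (g x)⁻¹) with hq_def
    have hmp : Measurable p := measurable_const.mul hmu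
    have hmq : Measurable q := measurable_const.mul hmv
    have hppos : ∀ᵐ x ∂μ, 0 < p x := by
      filter_upwards [hfpos, hgpos] with x hfx hgx
      have h1 : 0 < g x ^ α := Real.rpow_pos_of_pos hgx _
      have h2 : 0 < f x ^ (-(1/α)) := Real.rpow_pos_of_pos hfx _
      positivity
    have hqpos : ∀ᵐ x ∂μ, 0 < q x := by
      filter_upwards [hfpos, hgpos] with x hfx hgx
      positivity
    have hp1 : ∫⁻ x, ENNReal.ofReal (p x) ∂μ = 1 := by
      calc ∫⁻ x, ENNReal.ofReal (p x) ∂μ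
          = ∫⁻ x, ENNReal.ofReal cC⁻¹
              * ENNReal.ofReal (g x ^ α * f x ^ (-(1/α))) ∂μ := by
            simp only [hp_def, ENNReal.ofReal_mul (inv_nonneg.2 hcC.le)]
        _ = ENNReal.ofReal cC⁻¹ * C := lintegral_const_mul _ hmu.ennreal_ofReal
        _ = 1 := by
            rw [hC, ← ENNReal.ofReal_mul (inv_nonneg.2 hcC.le), inv_mul_cancel₀ hcC.ne',
              ENNReal.ofReal_one]
    have hq1 : ∫⁻ x, ENNReal.ofReal (q x) ∂μ = 1 := by
      calc ∫⁻ x, ENNReal.ofReal (q x) ∂μ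
          = ∫⁻ x, ENNReal.ofReal dD⁻¹ * ENNReal.ofReal (f x * (g x)⁻¹) ∂μ := by
            simp only [hq_def, ENNReal.ofReal_mul (inv_nonneg.2 hdD.le)]
        _ = ENNReal.ofReal dD⁻¹ * D := lintegral_const_mul _ hmv.ennreal_ofReal
        _ = 1 := by
            rw [hD, ← ENNReal.ofReal_mul (inv_nonneg.2 hdD.le), inv_mul_cancel₀ hdD.ne',
              ENNReal.ofReal_one]
    set I₁ := ∫⁻ x, ENNReal.ofReal (p x ^ rP * q x ^ rQ) ∂μ with hI₁_def
    set I₂ := ∫⁻ x, ENNReal.ofReal (p x ^ rQ * q x ^ rP) ∂μ with hI₂_def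
    -- decompose A and B
    have hA : A = ENNReal.ofReal (cC ^ rP * dD ^ rQ) * I₁ := by
      have hcongr : A = ∫⁻ x, ENNReal.ofReal
          ((cC ^ rP * dD ^ rQ) * (p x ^ rP * q x ^ rQ)) ∂μ := by
        refine lintegral_congr_ae ?_
        filter_upwards [hfpos, hgpos] with x hfx hgx
        congr 1
        have hgα : 0 < g x ^ α := Real.rpow_pos_of_pos hgx _
        have hfα : 0 < f x ^ (-(1/α)) := Real.rpow_pos_of_pos hfx _
        have hpx : 0 < p x := by rw [hp_def]; positivity
        have hqx : 0 < q x := by rw [hq_def]; positivity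
        have hux : g x ^ α * f x ^ (-(1/α)) = cC * p x := by
          rw [hp_def]; field_simp
        have hvx : f x * (g x)⁻¹ = dD * q x := by
          rw [hq_def]; field_simp
        calc f x ^ (1 - 1/α)
            = (g x ^ α * f x ^ (-(1/α))) ^ rP * (f x * (g x)⁻¹) ^ rQ :=
              ident1 hα0 hfx hgx
          _ = (cC * p x) ^ rP * (dD * q x) ^ rQ := by rw [hux, hvx]
          _ = (cC ^ rP * dD ^ rQ) * (p x ^ rP * q x ^ rQ) := by
              rw [Real.mul_rpow hcC.le hpx.le, Real.mul_rpow hdD.le hqx.le]; ring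
      rw [hcongr]
      have hnn : (0:ℝ) ≤ cC ^ rP * dD ^ rQ := by positivity
      simp only [ENNReal.ofReal_mul hnn]
      exact lintegral_const_mul _ ((hmp.pow measurable_const).mul
        (hmq.pow measurable_const)).ennreal_ofReal
    have hB : B = ENNReal.ofReal (cC ^ rQ * dD ^ rP) * I₂ := by
      have hcongr : B = ∫⁻ x, ENNReal.ofReal
          ((cC ^ rQ * dD ^ rP) * (p x ^ rQ * q x ^ rP)) ∂μ := by
        refine lintegral_congr_ae ?_
        filter_upwards [hfpos, hgpos] with x hfx hgx
        congr 1
        have hgα : 0 < g x ^ α := Real.rpow_pos_of_pos hgx _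
        have hfα : 0 < f x ^ (-(1/α)) := Real.rpow_pos_of_pos hfx _
        have hpx : 0 < p x := by rw [hp_def]; positivity
        have hqx : 0 < q x := by rw [hq_def]; positivity
        have hux : g x ^ α * f x ^ (-(1/α)) = cC * p x := by
          rw [hp_def]; field_simp
        have hvx : f x * (g x)⁻¹ = dD * q x := by
          rw [hq_def]; field_simp
        calc g x ^ (α - 1)
            = (g x ^ α * f x ^ (-(1/α))) ^ rQ * (f x * (g x)⁻¹) ^ rP :=
              ident2 hα0 hfx hgx
          _ = (cC * p x) ^ rQ * (dD * q x) ^ rP := by rw [hux, hvx]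
          _ = (cC ^ rQ * dD ^ rP) * (p x ^ rQ * q x ^ rP) := by
              rw [Real.mul_rpow hcC.le hpx.le, Real.mul_rpow hdD.le hqx.le]; ring
      rw [hcongr]
      have hnn : (0:ℝ) ≤ cC ^ rQ * dD ^ rP := by positivity
      simp only [ENNReal.ofReal_mul hnn]
      exact lintegral_const_mul _ ((hmp.pow measurable_const).mul
        (hmq.pow measurable_const)).ennreal_ofReal
    -- from equality conclude I₁ * I₂ = 1
    have hKK : ENNReal.ofReal (cC ^ rP * dD ^ rQ) * ENNReal.ofReal (cC ^ rQ * dD ^ rP)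
        = ENNReal.ofReal (cC * dD) := by
      rw [← ENNReal.ofReal_mul (by positivity)]
      congr 1
      rw [show cC ^ rP * dD ^ rQ * (cC ^ rQ * dD ^ rP)
          = (cC ^ rP * cC ^ rQ) * (dD ^ rP * dD ^ rQ) by ring,
        ← Real.rpow_add hcC, ← Real.rpow_add hdD, hrPQ, Real.rpow_one, Real.rpow_one]
    have hprod : ENNReal.ofReal (cC * dD) * (I₁ * I₂) = ENNReal.ofReal (cC * dD) * 1 := by
      rw [mul_one, ← hKK]
      calc ENNReal.ofReal (cC ^ rP * dD ^ rQ) * ENNReal.ofReal (cC ^ rQ * dD ^ rP) * (I₁ * I₂)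
          = (ENNReal.ofReal (cC ^ rP * dD ^ rQ) * I₁)
            * (ENNReal.ofReal (cC ^ rQ * dD ^ rP) * I₂) := by ring
        _ = A * B := by rw [hA, hB]
        _ = C * D := h
        _ = ENNReal.ofReal (cC * dD) := by
            rw [hC, hD, ← ENNReal.ofReal_mul hcC.le]
        _ = _ := hKK.symm
    have hI₁I₂ : I₁ * I₂ = 1 :=
      (ENNReal.mul_right_inj (ENNReal.ofReal_pos.2 (mul_pos hcC hdD)).ne'
        ENNReal.ofReal_ne_top).mp hprod
    have hstep1 := holder_step μ hrP hrQ hrPQ hmp hmq hppos hqpos hp1 hq1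
    have hstep2 := holder_step μ hrQ hrP (by linarith [hrPQ]) hmp hmq hppos hqpos hp1 hq1
    have hI₁le : I₁ ≤ 1 := hstep1.1
    have hI₂le : I₂ ≤ 1 := hstep2.1
    have hI₁1 : I₁ = 1 := by
      refine le_antisymm hI₁le ?_
      calc (1:ℝ≥0∞) = I₁ * I₂ := hI₁I₂.symm
        _ ≤ I₁ * 1 := mul_le_mul_right hI₂le _
        _ = I₁ := mul_one _
    have hpq : p =ᵐ[μ] q := hstep1.2 hI₁1
    -- conclude proportionality
    refine ⟨(cC / dD) ^ (α/(1+α)), Real.rpow_pos_of_pos (div_pos hcC hdD) _, ?_⟩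
    filter_upwards [hpq, hfpos, hgpos] with x hx hfx hgx
    have hgα : 0 < g x ^ α := Real.rpow_pos_of_pos hgx _
    have hfα : 0 < f x ^ (-(1/α)) := Real.rpow_pos_of_pos hfx _
    have hk : 0 < cC / dD := div_pos hcC hdD
    have h2 : g x ^ α * f x ^ (-(1/α)) = (cC / dD) * (f x * (g x)⁻¹) := by
      rw [hp_def, hq_def] at hx
      field_simp at hx ⊢
      linarith [hx]
    have hlog2 : α * Real.log (g x) + (-(1/α)) * Real.log (f x)
        = Real.log (cC / dD) + (Real.log (f x) - Real.log (g x)) := by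
      have hl := congrArg Real.log h2
      rw [Real.log_mul hgα.ne' hfα.ne', Real.log_rpow hgx, Real.log_rpow hfx,
        Real.log_mul hk.ne' (by positivity), Real.log_mul hfx.ne' (by positivity),
        Real.log_inv] at hl
      linarith [hl]
    apply Real.log_injOn_pos (Set.mem_Ioi.2 hgα) (Set.mem_Ioi.2 (by positivity))
    rw [Real.log_rpow hgx, Real.log_mul (by positivity) hfx.ne', Real.log_rpow hk]
    have he : (α/(1+α)) * (1+α) = α := by field_simp
    have hβ : (1/α) * α = 1 := by field_simp
    apply mul_left_cancel₀ (show (1:ℝ)+α ≠ 0 from h1α.ne')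
    linear_combination α * hlog2 - Real.log (cC / dD) * he + Real.log (f x) * hβ
  · -- easy direction
    rintro ⟨c, hc, hcf⟩
    have hA2 : A = ENNReal.ofReal c⁻¹ * C := by
      rw [hC_def, ← lintegral_const_mul _ hmu.ennreal_ofReal]
      refine lintegral_congr_ae ?_
      filter_upwards [hfpos, hgpos, hcf] with x hfx hgx hx
      rw [← ENNReal.ofReal_mul (inv_nonneg.2 hc.le)]
      congr 1
      have hfe : f x ^ (1 - 1/α) = f x * f x ^ (-(1/α)) := by
        rw [show (1 - 1/α) = 1 + (-(1/α)) by ring, Real.rpow_add hfx, Real.rpow_one]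
      rw [hfe, hx]
      field_simp
    have hB2 : B = ENNReal.ofReal c * D := by
      rw [hD_def, ← lintegral_const_mul _ hmv.ennreal_ofReal]
      refine lintegral_congr_ae ?_
      filter_upwards [hfpos, hgpos, hcf] with x hfx hgx hx
      rw [← ENNReal.ofReal_mul hc.le]
      congr 1
      have hge : g x ^ (α - 1) = g x ^ α * (g x)⁻¹ := by
        rw [show (α - 1) = α + (-1) by ring, Real.rpow_add hgx, Real.rpow_neg_one]
      rw [hge, hx]
      ring
    rw [hA2, hB2]
    calc ENNReal.ofReal c⁻¹ * C * (ENNReal.ofReal c * D)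
        = (ENNReal.ofReal c⁻¹ * ENNReal.ofReal c) * (C * D) := by ring
      _ = C * D := by
          rw [← ENNReal.ofReal_mul (inv_nonneg.2 hc.le), inv_mul_cancel₀ hc.ne',
            ENNReal.ofReal_one, one_mul]
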